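/- Let L(Q) = Π_{u=1}^{M} Π_{s,r} (exp(Q Δt_u))_{sr}^{N_{sr}(u)} be the likelihood of a discretely observed CTMC, where all N_{sr}(u) are nonnegative integers and exp(Q Δt_u)_{sr} > 0 whenever N_{sr}(u) > 0. Then for an allowed pair (α,β), ∂ log L / ∂ q_{αβ} = Σ_{u,s,r} N_{sr}(u) · (exp(C^{(αβ)} Δt_u))_{s, h+r} / (exp(Q Δt_u))_{sr}, where C^{(αβ)} = [[Q, e_α e_β^T − e_α e_α^T],[0, Q]]. -/

import Mathlib

open NormedSpace

section Aux
open Matrix Finset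

attribute [local instance] Matrix.linftyOpNormedAddCommGroup Matrix.linftyOpNormedRing
  Matrix.linftyOpNormedAlgebra

variable {n : Type*} [Fintype n] [DecidableEq n]

/-- The candidate derivative of `M ↦ M ^ k` in direction `E`. -/
noncomputable def ctmcS (A E : Matrix n n ℝ) (k : ℕ) : Matrix n n ℝ :=
  ∑ i ∈ Finset.range k, A ^ i * E * A ^ (k - 1 - i)

lemma ctmcS_succ (M E : Matrix n n ℝ) (k : ℕ) :
    ctmcS M E (k + 1) = ctmcS M E k * M + M ^ k * E := by
  unfold ctmcS
  rw [Finset.sum_range_succ, Finset.sum_mul]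
  congr 1
  · refine Finset.sum_congr rfl fun i hi => ?_
    rw [Finset.mem_range] at hi
    have h1 : k + 1 - 1 - i = (k - 1 - i) + 1 := by omega
    rw [h1, pow_succ, ← mul_assoc]
  · simp

lemma ctmc_hasDerivAt_pow (A E : Matrix n n ℝ) (k : ℕ) (x : ℝ) :
    HasDerivAt (fun y : ℝ => (A + y • E) ^ k) (ctmcS (A + x • E) E k) x := by
  induction k with
  | zero =>
    simp only [pow_zero, ctmcS, Finset.range_zero, Finset.sum_empty]
    exact hasDerivAt_const x _
  | succ k ih =>
    have hM : HasDerivAt (fun y : ℝ => A + y • E) E x := by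
      have h0 := ((hasDerivAt_id' x).smul_const E).const_add A
      rw [one_smul] at h0
      exact h0
    have h := ih.mul hM
    have : ctmcS (A + x • E) E (k + 1)
        = ctmcS (A + x • E) E k * (A + x • E) + (A + x • E) ^ k * E := ctmcS_succ _ _ _
    rw [this]
    exact h

lemma ctmc_norm_one_le : ‖(1 : Matrix n n ℝ)‖ ≤ 1 := by
  rw [Matrix.linfty_opNorm_def]
  have : ∀ i : n, (∑ j : n, ‖(1 : Matrix n n ℝ) i j‖₊) ≤ 1 := by
    intro i
    have : (∑ j : n, ‖(1 : Matrix n n ℝ) i j‖₊) = 1 := by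
      simp [Matrix.one_apply, apply_ite (‖·‖₊ : ℝ → NNReal), Finset.sum_ite_eq Finset.univ i]
    exact this.le
  exact_mod_cast Finset.sup_le fun i _ => this i

lemma ctmc_norm_pow_le (M : Matrix n n ℝ) (i : ℕ) : ‖M ^ i‖ ≤ ‖M‖ ^ i := by
  cases i with
  | zero => simpa using ctmc_norm_one_le
  | succ i => exact norm_pow_le' M i.succ_pos

lemma ctmc_norm_S_le {M E : Matrix n n ℝ} {C : ℝ} (hM : ‖M‖ ≤ C) (k : ℕ) :
    ‖ctmcS M E k‖ ≤ k * (C ^ (k - 1) * ‖E‖) := by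
  have hC0 : 0 ≤ C := le_trans (norm_nonneg M) hM
  calc ‖ctmcS M E k‖ ≤ ∑ i ∈ Finset.range k, ‖M ^ i * E * M ^ (k - 1 - i)‖ :=
        norm_sum_le _ _
    _ ≤ ∑ i ∈ Finset.range k, C ^ (k - 1) * ‖E‖ := by
        refine Finset.sum_le_sum fun i hi => ?_
        rw [Finset.mem_range] at hi
        have h1 : ‖M ^ i * E * M ^ (k - 1 - i)‖ ≤ ‖M ^ i‖ * ‖E‖ * ‖M ^ (k - 1 - i)‖ :=
          le_trans (norm_mul_le _ _) (by gcongr; exact norm_mul_le _ _)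
        have h2 : ‖M ^ i‖ ≤ C ^ i :=
          le_trans (ctmc_norm_pow_le M i) (pow_le_pow_left₀ (norm_nonneg M) hM i)
        have h3 : ‖M ^ (k - 1 - i)‖ ≤ C ^ (k - 1 - i) :=
          le_trans (ctmc_norm_pow_le M _) (pow_le_pow_left₀ (norm_nonneg M) hM _)
        have h4 : C ^ i * C ^ (k - 1 - i) = C ^ (k - 1) := by
          rw [← pow_add]; congr 1; omega
        calc ‖M ^ i * E * M ^ (k - 1 - i)‖ ≤ ‖M ^ i‖ * ‖E‖ * ‖M ^ (k - 1 - i)‖ := h1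
          _ ≤ C ^ i * ‖E‖ * C ^ (k - 1 - i) := by
              gcongr
          _ = C ^ (k - 1) * ‖E‖ := by rw [mul_right_comm, h4]
    _ = k * (C ^ (k - 1) * ‖E‖) := by rw [Finset.sum_const, Finset.card_range, nsmul_eq_mul]

/-- The summable bound used for termwise differentiation. -/
noncomputable def ctmcU (C En : ℝ) (k : ℕ) : ℝ := En * (C ^ (k - 1) / (Nat.factorial (k - 1)))

lemma ctmc_summable_U (C En : ℝ) : Summable (ctmcU C En) := by
  have hg : Summable (fun m : ℕ => C ^ m / Nat.factorial m) := Real.summable_pow_div_factorial C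
  have h1 : Summable (fun k : ℕ => C ^ (k - 1) / (Nat.factorial (k - 1))) := by
    refine (summable_nat_add_iff 1).1 ?_
    simpa using hg
  exact h1.mul_left En

lemma ctmc_bound {A E : Matrix n n ℝ} {y : ℝ} (hy : ‖y‖ ≤ 1) (k : ℕ) :
    ‖(Nat.factorial k : ℝ)⁻¹ • ctmcS (A + y • E) E k‖ ≤ ctmcU (‖A‖ + ‖E‖) ‖E‖ k := by
  have hM : ‖A + y • E‖ ≤ ‖A‖ + ‖E‖ := by
    refine le_trans (norm_add_le _ _) ?_
    gcongr
    calc ‖y • E‖ = ‖y‖ * ‖E‖ := norm_smul y E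
      _ ≤ 1 * ‖E‖ := by gcongr
      _ = ‖E‖ := one_mul _
  set C := ‖A‖ + ‖E‖ with hC
  have hC0 : 0 ≤ C := le_trans (norm_nonneg _) hM
  have h1 : ‖(Nat.factorial k : ℝ)⁻¹ • ctmcS (A + y • E) E k‖
      ≤ (Nat.factorial k : ℝ)⁻¹ * (k * (C ^ (k - 1) * ‖E‖)) := by
    rw [norm_smul]
    gcongr
    · simp
    · exact ctmc_norm_S_le hM k
  refine le_trans h1 ?_
  unfold ctmcU
  rcases Nat.eq_zero_or_pos k with hk | hk
  · subst hk
    simp [div_nonneg (pow_nonneg hC0 _) (by positivity : (0:ℝ) ≤ (Nat.factorial (0-1) : ℝ))]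
  · have hfac : (Nat.factorial k : ℝ) = k * (Nat.factorial (k - 1)) := by
      exact_mod_cast (Nat.mul_factorial_pred hk.ne').symm
    have hkpos : (0:ℝ) < k := by exact_mod_cast hk
    have hfacpos : (0:ℝ) < (Nat.factorial (k-1) : ℝ) := by positivity
    rw [hfac]
    rw [mul_inv]
    have : (k:ℝ)⁻¹ * ((Nat.factorial (k - 1)) : ℝ)⁻¹ * ((k:ℝ) * (C ^ (k - 1) * ‖E‖))
        = ‖E‖ * (C ^ (k - 1) / (Nat.factorial (k - 1))) := by
      field_simp
    rw [this]

/-- The entry evaluation continuous linear map. -/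
noncomputable def ctmcEntry {p q : Type*} [Fintype p] [Fintype q] (s : p) (r : q) :
    Matrix p q ℝ →L[ℝ] ℝ :=
  LinearMap.toContinuousLinearMap
    { toFun := fun A => A s r
      map_add' := fun _ _ => rfl
      map_smul' := fun _ _ => rfl }

@[simp] lemma ctmcEntry_apply {p q : Type*} [Fintype p] [Fintype q] (s : p) (r : q)
    (A : Matrix p q ℝ) : ctmcEntry s r A = A s r := rfl

lemma ctmc_summable_S (A E : Matrix n n ℝ) :
    Summable (fun k : ℕ => (Nat.factorial k : ℝ)⁻¹ • ctmcS A E k) := by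
  refine Summable.of_norm_bounded (ctmc_summable_U (‖A‖ + ‖E‖) ‖E‖) fun k => ?_
  have := ctmc_bound (A := A) (E := E) (y := 0) (by simp) k
  simpa using this

/-- Key lemma: derivative of the exponential in a direction, at parameter `0`. -/
lemma ctmc_hasDerivAt_exp (A E : Matrix n n ℝ) :
    HasDerivAt (fun y : ℝ => exp (A + y • E))
      (∑' k : ℕ, (Nat.factorial k : ℝ)⁻¹ • ctmcS A E k) 0 := by
  have hmain : HasDerivAt (fun y : ℝ => ∑' k : ℕ, (Nat.factorial k : ℝ)⁻¹ • (A + y • E) ^ k)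
      (∑' k : ℕ, (Nat.factorial k : ℝ)⁻¹ • ctmcS (A + (0:ℝ) • E) E k) 0 := by
    refine hasDerivAt_tsum_of_isPreconnected (ctmc_summable_U (‖A‖ + ‖E‖) ‖E‖)
      (Metric.isOpen_ball (x := (0:ℝ)) (ε := 1))
      ((convex_ball (0:ℝ) 1).isPreconnected)
      (fun k y _ => ((ctmc_hasDerivAt_pow A E k y).const_smul ((Nat.factorial k : ℝ)⁻¹)))
      (fun k y hy => ?_) (Metric.mem_ball_self one_pos) ?_ (Metric.mem_ball_self one_pos)
    · exact ctmc_bound (by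
        rw [Metric.mem_ball, dist_zero_right] at hy
        exact hy.le) k
    · simpa using (NormedSpace.exp_series_hasSum_exp' (𝕂 := ℝ) (A + (0:ℝ) • E)).summable
  have hfun : (fun y : ℝ => exp (A + y • E))
      = fun y : ℝ => ∑' k : ℕ, (Nat.factorial k : ℝ)⁻¹ • (A + y • E) ^ k := by
    funext y; rw [NormedSpace.exp_eq_tsum ℝ]
  rw [hfun]
  simpa using hmain

lemma ctmc_fromBlocks_pow (A E : Matrix n n ℝ) (k : ℕ) :
    (Matrix.fromBlocks A E 0 A) ^ k
      = Matrix.fromBlocks (A ^ k) (ctmcS A E k) 0 (A ^ k) := by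
  induction k with
  | zero => simp [ctmcS, ← Matrix.fromBlocks_one]
  | succ k ih =>
    rw [pow_succ, ih, Matrix.fromBlocks_multiply, ctmcS_succ]
    simp only [Matrix.mul_zero, Matrix.zero_mul, add_zero, zero_add, mul_zero, zero_mul]
    rw [pow_succ, add_comm (A ^ k * E)]

/-- The `(1,2)` block of the exponential of the block matrix is the directional derivative. -/
lemma ctmc_exp_fromBlocks_entry (A E : Matrix n n ℝ) (s r : n) :
    (exp (Matrix.fromBlocks A E 0 A) : Matrix (n ⊕ n) (n ⊕ n) ℝ) (Sum.inl s) (Sum.inr r)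
      = (∑' k : ℕ, (Nat.factorial k : ℝ)⁻¹ • ctmcS A E k) s r := by
  have hbig : HasSum (fun k : ℕ => (Nat.factorial k : ℝ)⁻¹ • (Matrix.fromBlocks A E 0 A) ^ k)
      (exp (Matrix.fromBlocks A E 0 A)) :=
    NormedSpace.exp_series_hasSum_exp' _
  have h1 := hbig.mapL (ctmcEntry (Sum.inl s) (Sum.inr r))
  have h2 := (ctmc_summable_S A E).hasSum.mapL (ctmcEntry s r)
  simp only [ctmcEntry_apply, Function.comp] at h1 h2
  have hee : (fun k : ℕ => ((Nat.factorial k : ℝ)⁻¹ • (Matrix.fromBlocks A E 0 A) ^ k)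
        (Sum.inl s) (Sum.inr r))
      = fun k : ℕ => ((Nat.factorial k : ℝ)⁻¹ • ctmcS A E k) s r := by
    funext k
    rw [ctmc_fromBlocks_pow]
    simp [Matrix.fromBlocks_apply₁₂]
  rw [hee] at h1
  exact h1.unique h2

/-- Entrywise version of the key derivative lemma, shifted to base point `q`. -/
lemma ctmc_hasDerivAt_exp_entry (A E : Matrix n n ℝ) (q : ℝ) (s r : n) :
    HasDerivAt (fun x : ℝ => (exp (A + (x - q) • E) : Matrix n n ℝ) s r)
      ((exp (Matrix.fromBlocks A E 0 A) : Matrix (n ⊕ n) (n ⊕ n) ℝ)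
        (Sum.inl s) (Sum.inr r)) q := by
  have h0 : HasDerivAt (fun y : ℝ => (exp (A + y • E) : Matrix n n ℝ) s r)
      ((exp (Matrix.fromBlocks A E 0 A) : Matrix (n ⊕ n) (n ⊕ n) ℝ)
        (Sum.inl s) (Sum.inr r)) 0 := by
    rw [ctmc_exp_fromBlocks_entry]
    exact ((ctmcEntry s r).hasFDerivAt.comp_hasDerivAt 0 (ctmc_hasDerivAt_exp A E))
  have hin : HasDerivAt (fun x : ℝ => x - q) 1 q := (hasDerivAt_id q).sub_const q
  have hcomp := HasDerivAt.comp_of_eq (x := q) h0 hin (by rw [sub_self])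
  rw [mul_one] at hcomp
  exact hcomp

end Aux

/-- Gradient of the log-likelihood of a discretely observed CTMC: with
`L(Q) = Π_u Π_{s,r} (exp(Q Δt_u))_{sr}^{N_{sr}(u)}` and the allowed pair `(α,β)` (diagonal
compensated so rows sum to zero), `∂ log L / ∂ q_{αβ}` equals
`Σ_{u,s,r} N_{sr}(u) (exp(C^{(αβ)} Δt_u))_{s,h+r} / (exp(Q Δt_u))_{sr}` where
`C^{(αβ)} = [[Q, e_α e_β^T − e_α e_α^T], [0, Q]]`. -/
theorem gradient_logLikelihood_ctmc {h M : ℕ} (Q : Matrix (Fin h) (Fin h) ℝ)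
    (hoff : ∀ i j, i ≠ j → 0 ≤ Q i j) (hrow : ∀ i, ∑ j, Q i j = 0)
    (α β : Fin h) (hαβ : α ≠ β) (hpos : 0 < Q α β)
    (N : Fin M → Fin h → Fin h → ℕ) (Δt : Fin M → ℝ) (hΔt : ∀ u, 0 < Δt u)
    (hexp : ∀ u s r, 0 < N u s r →
      0 < (exp (Δt u • Q) : Matrix (Fin h) (Fin h) ℝ) s r) :
    HasDerivAt
      (fun x : ℝ => ∑ u, ∑ s, ∑ r, (N u s r : ℝ) *
        Real.log ((exp (Δt u • (Q + (x - Q α β) •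
          (Matrix.single α β (1:ℝ) - Matrix.single α α 1)))
            : Matrix (Fin h) (Fin h) ℝ) s r))
      (∑ u, ∑ s, ∑ r, (N u s r : ℝ) *
        (exp (Δt u • Matrix.fromBlocks Q
            (Matrix.single α β (1:ℝ) - Matrix.single α α 1) 0 Q)
          : Matrix (Fin h ⊕ Fin h) (Fin h ⊕ Fin h) ℝ) (Sum.inl s) (Sum.inr r) /
        (exp (Δt u • Q) : Matrix (Fin h) (Fin h) ℝ) s r)
      (Q α β) := by
  set D : Matrix (Fin h) (Fin h) ℝ :=
    Matrix.single α β (1:ℝ) - Matrix.single α α 1 with hD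
  set q : ℝ := Q α β with hq
  refine HasDerivAt.fun_sum fun u _ => HasDerivAt.fun_sum fun s _ => HasDerivAt.fun_sum fun r _ => ?_
  have hfun : ∀ x : ℝ, Δt u • (Q + (x - q) • D) = Δt u • Q + (x - q) • (Δt u • D) := by
    intro x; rw [smul_add, smul_comm]
  have hblock : Δt u • Matrix.fromBlocks Q D 0 Q
      = Matrix.fromBlocks (Δt u • Q) (Δt u • D) 0 (Δt u • Q) := by
    rw [Matrix.fromBlocks_smul, smul_zero]
  by_cases hN : N u s r = 0
  · simp only [hN, Nat.cast_zero, zero_mul, zero_div]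
    exact hasDerivAt_const q (0:ℝ)
  · have hNe : 0 < N u s r := Nat.pos_of_ne_zero hN
    have hg : HasDerivAt
        (fun x : ℝ => (exp (Δt u • (Q + (x - q) • D)) : Matrix (Fin h) (Fin h) ℝ) s r)
        ((exp (Δt u • Matrix.fromBlocks Q D 0 Q)
            : Matrix (Fin h ⊕ Fin h) (Fin h ⊕ Fin h) ℝ) (Sum.inl s) (Sum.inr r)) q := by
      simp only [hfun, hblock]
      exact ctmc_hasDerivAt_exp_entry (Δt u • Q) (Δt u • D) q s r
    have hval : (exp (Δt u • (Q + (q - q) • D)) : Matrix (Fin h) (Fin h) ℝ) s r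
        = (exp (Δt u • Q) : Matrix (Fin h) (Fin h) ℝ) s r := by
      rw [sub_self, zero_smul, add_zero]
    have hne : (exp (Δt u • (Q + (q - q) • D)) : Matrix (Fin h) (Fin h) ℝ) s r ≠ 0 := by
      rw [hval]; exact (hexp u s r hNe).ne'
    have hlog := (hg.log hne).const_mul (N u s r : ℝ)
    rw [hval] at hlog
    rw [mul_div_assoc]
    exact hlog
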